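/- Continuous dependence on the damping coefficient (scalar case): let λ > 0, T > 0, and let δ₁, δ₂ : [0,T] → [0,∞) be bounded measurable. If u₁ and u₂ solve uᵢ'' + 2δᵢ(t)uᵢ' + λ²uᵢ = 0 with the same initial data u₁(0) = u₂(0) = a, u₁'(0) = u₂'(0) = b, then for all t ∈ [0,T], |u₂'(t) − u₁'(t)|² + λ²|u₂(t) − u₁(t)|² ≤ 2(b² + λ²a²)·e^{2t}·∫₀ᵗ |δ₂(s) − δ₁(s)|² ds. -/

import Mathlib

set_option maxHeartbeats 2000000 in
/-- Continuous dependence on the damping coefficient (scalar case). -/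
theorem stmt_6 (lam T : ℝ) (hlam : 0 < lam) (hT : 0 < T)
    (δ₁ δ₂ : ℝ → ℝ) (hmeas₁ : Measurable δ₁) (hmeas₂ : Measurable δ₂)
    (hnn₁ : ∀ t ∈ Set.Icc (0:ℝ) T, 0 ≤ δ₁ t)
    (hnn₂ : ∀ t ∈ Set.Icc (0:ℝ) T, 0 ≤ δ₂ t)
    (hbdd₁ : ∃ M, ∀ t ∈ Set.Icc (0:ℝ) T, δ₁ t ≤ M)
    (hbdd₂ : ∃ M, ∀ t ∈ Set.Icc (0:ℝ) T, δ₂ t ≤ M)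
    (a b : ℝ) (u₁ u₂ : ℝ → ℝ)
    (hu₁ : ContDiff ℝ 2 u₁) (hu₂ : ContDiff ℝ 2 u₂)
    (hode₁ : ∀ t ∈ Set.Icc (0:ℝ) T,
      deriv (deriv u₁) t + 2 * δ₁ t * deriv u₁ t + lam ^ 2 * u₁ t = 0)
    (hode₂ : ∀ t ∈ Set.Icc (0:ℝ) T,
      deriv (deriv u₂) t + 2 * δ₂ t * deriv u₂ t + lam ^ 2 * u₂ t = 0)
    (hinit₁ : u₁ 0 = a ∧ deriv u₁ 0 = b)
    (hinit₂ : u₂ 0 = a ∧ deriv u₂ 0 = b) :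
    ∀ t ∈ Set.Icc (0:ℝ) T,
      (deriv u₂ t - deriv u₁ t) ^ 2 + lam ^ 2 * (u₂ t - u₁ t) ^ 2 ≤
        2 * (b ^ 2 + lam ^ 2 * a ^ 2) * Real.exp (2 * t) *
          ∫ s in (0:ℝ)..t, (δ₂ s - δ₁ s) ^ 2 := by
  obtain ⟨M₁, hM₁⟩ := hbdd₁
  obtain ⟨M₂, hM₂⟩ := hbdd₂
  set K : ℝ := b ^ 2 + lam ^ 2 * a ^ 2 with hK
  have hKnn : 0 ≤ K := by positivity
  -- differentiability facts
  have hd₁ : Differentiable ℝ u₁ := hu₁.differentiable (by norm_num)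
  have hd₂ : Differentiable ℝ u₂ := hu₂.differentiable (by norm_num)
  have hc₁ : ContDiff ℝ 1 (deriv u₁) :=
    (contDiff_succ_iff_deriv.mp (show ContDiff ℝ (1+1) u₁ by norm_num [hu₁])).2.2
  have hc₂ : ContDiff ℝ 1 (deriv u₂) :=
    (contDiff_succ_iff_deriv.mp (show ContDiff ℝ (1+1) u₂ by norm_num [hu₂])).2.2
  have hdd₁ : Differentiable ℝ (deriv u₁) := hc₁.differentiable one_ne_zero
  have hdd₂ : Differentiable ℝ (deriv u₂) := hc₂.differentiable one_ne_zero
  have hcdd₁ : Continuous (deriv (deriv u₁)) := hc₁.continuous_deriv le_rfl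
  have hcdd₂ : Continuous (deriv (deriv u₂)) := hc₂.continuous_deriv le_rfl
  -- energy of the difference
  set E : ℝ → ℝ := fun t => (deriv u₂ t - deriv u₁ t) ^ 2 + lam ^ 2 * (u₂ t - u₁ t) ^ 2 with hEdef
  set E' : ℝ → ℝ := fun t =>
    2 * (deriv u₂ t - deriv u₁ t) * (deriv (deriv u₂) t - deriv (deriv u₁) t) +
      2 * lam ^ 2 * (u₂ t - u₁ t) * (deriv u₂ t - deriv u₁ t) with hE'def
  have hE : ∀ t : ℝ, HasDerivAt E (E' t) t := by
    intro t
    have h1 : HasDerivAt (fun t => deriv u₂ t - deriv u₁ t)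
        (deriv (deriv u₂) t - deriv (deriv u₁) t) t :=
      ((hdd₂ t).hasDerivAt).sub ((hdd₁ t).hasDerivAt)
    have h2 : HasDerivAt (fun t => u₂ t - u₁ t) (deriv u₂ t - deriv u₁ t) t :=
      ((hd₂ t).hasDerivAt).sub ((hd₁ t).hasDerivAt)
    have := ((h1.fun_pow 2).add (((h2.fun_pow 2)).const_mul (lam ^ 2)))
    refine this.congr_deriv ?_
    ring
  have hEcont : Continuous E := by
    fun_prop
  have hE'cont : Continuous E' := by
    fun_prop
  -- H = e^{-2t} E
  set H : ℝ → ℝ := fun t => Real.exp (-2 * t) * E t with hHdef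
  set H' : ℝ → ℝ := fun t => Real.exp (-2 * t) * (E' t - 2 * E t) with hH'def
  have hH : ∀ t : ℝ, HasDerivAt H (H' t) t := by
    intro t
    have hexp : HasDerivAt (fun t : ℝ => Real.exp (-2 * t)) (-2 * Real.exp (-2 * t)) t := by
      have := ((hasDerivAt_id t).const_mul (-2 : ℝ)).exp
      simpa [mul_comm] using this
    have := hexp.mul (hE t)
    refine this.congr_deriv ?_
    simp [hH'def]
    ring
  have hH'cont : Continuous H' := by fun_prop
  -- energy of u₁ is nonincreasing on [0,T]
  set E₁ : ℝ → ℝ := fun t => (deriv u₁ t) ^ 2 + lam ^ 2 * (u₁ t) ^ 2 with hE₁def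
  have hE₁ : ∀ t : ℝ, HasDerivAt E₁
      (2 * deriv u₁ t * deriv (deriv u₁) t + 2 * lam ^ 2 * u₁ t * deriv u₁ t) t := by
    intro t
    have h1 : HasDerivAt (deriv u₁) (deriv (deriv u₁) t) t := (hdd₁ t).hasDerivAt
    have h2 : HasDerivAt u₁ (deriv u₁ t) t := (hd₁ t).hasDerivAt
    have := ((h1.fun_pow 2).add ((h2.fun_pow 2).const_mul (lam ^ 2)))
    refine this.congr_deriv ?_
    ring
  have hE₁anti : AntitoneOn E₁ (Set.Icc 0 T) := by
    apply antitoneOn_of_deriv_nonpos (convex_Icc 0 T)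
    · exact (by fun_prop : Continuous E₁).continuousOn
    · intro t ht
      exact ((hE₁ t).differentiableAt).differentiableWithinAt
    · intro t ht
      rw [interior_Icc] at ht
      have ht' : t ∈ Set.Icc (0:ℝ) T := Set.Ioo_subset_Icc_self ht
      rw [(hE₁ t).deriv]
      have hode := hode₁ t ht'
      have hδ := hnn₁ t ht'
      have hdd : deriv (deriv u₁) t = -(2 * δ₁ t * deriv u₁ t) - lam ^ 2 * u₁ t := by
        linarith
      rw [hdd]
      nlinarith [mul_nonneg hδ (sq_nonneg (deriv u₁ t))]
  have hKbound : ∀ s ∈ Set.Icc (0:ℝ) T, (deriv u₁ s) ^ 2 ≤ K := by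
    intro s hs
    have h0 : (0:ℝ) ∈ Set.Icc (0:ℝ) T := ⟨le_rfl, hT.le⟩
    have hle := hE₁anti h0 hs hs.1
    have hE₁0 : E₁ 0 = K := by simp [hE₁def, hinit₁.1, hinit₁.2, hK]
    rw [hE₁0] at hle
    simp only [hE₁def] at hle
    nlinarith [mul_nonneg (sq_nonneg lam) (sq_nonneg (u₁ s))]
  -- key differential inequality
  have hkey : ∀ s ∈ Set.Icc (0:ℝ) T,
      H' s ≤ Real.exp (-2 * s) * (2 * K * (δ₂ s - δ₁ s) ^ 2) := by
    intro s hs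
    have h1 := hode₁ s hs
    have h2 := hode₂ s hs
    have hδ := hnn₂ s hs
    have hub := hKbound s hs
    have hEbd : E' s - 2 * E s ≤ 2 * K * (δ₂ s - δ₁ s) ^ 2 := by
      simp only [hE'def, hEdef]
      have hdd2 : deriv (deriv u₂) s = -(2 * δ₂ s * deriv u₂ s) - lam ^ 2 * u₂ s := by linarith
      have hdd1 : deriv (deriv u₁) s = -(2 * δ₁ s * deriv u₁ s) - lam ^ 2 * u₁ s := by linarith
      rw [hdd1, hdd2]
      nlinarith [sq_nonneg ((δ₂ s - δ₁ s) * deriv u₁ s + (deriv u₂ s - deriv u₁ s)),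
        mul_nonneg hδ (sq_nonneg (deriv u₂ s - deriv u₁ s)),
        mul_nonneg (sq_nonneg (δ₂ s - δ₁ s)) (sub_nonneg.mpr hub),
        sq_nonneg (u₂ s - u₁ s), sq_nonneg lam]
    exact mul_le_mul_of_nonneg_left hEbd (Real.exp_pos _).le
  -- now fix t
  intro t ht
  obtain ⟨ht0, htT⟩ := ht
  set D : ℝ → ℝ := fun s => (δ₂ s - δ₁ s) ^ 2 with hDdef
  have hDmeas : Measurable D := by fun_prop
  have hIccsub : Set.Icc (0:ℝ) t ⊆ Set.Icc (0:ℝ) T := Set.Icc_subset_Icc le_rfl htT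
  have hOcsub : Set.Ioc (0:ℝ) t ⊆ Set.Icc (0:ℝ) T := fun s hsm =>
    ⟨hsm.1.le, hsm.2.trans htT⟩
  set M : ℝ := max M₁ M₂ with hM
  have hDbd : ∀ s ∈ Set.Icc (0:ℝ) T, D s ≤ M ^ 2 := by
    intro s hs
    have h1 := hnn₁ s hs; have h2 := hnn₂ s hs
    have h3 := hM₁ s hs; have h4 := hM₂ s hs
    have h5 : δ₁ s ≤ M := h3.trans (le_max_left _ _)
    have h6 : δ₂ s ≤ M := h4.trans (le_max_right _ _)
    have : |δ₂ s - δ₁ s| ≤ M := abs_sub_le_iff.mpr ⟨by linarith, by linarith⟩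
    calc D s = |δ₂ s - δ₁ s| ^ 2 := by simp [hDdef, sq_abs]
    _ ≤ M ^ 2 := by nlinarith [abs_nonneg (δ₂ s - δ₁ s)]
  -- integrability of g = 2K * D and of φ = exp(-2s) * g
  have hgint : IntervalIntegrable (fun s => 2 * K * D s) MeasureTheory.volume 0 t := by
    rw [intervalIntegrable_iff_integrableOn_Ioc_of_le ht0]
    apply MeasureTheory.Integrable.mono' (g := fun _ => 2 * K * M ^ 2)
      ((MeasureTheory.integrableOn_const_iff).mpr (Or.inr measure_Ioc_lt_top))
    · exact ((hDmeas.const_mul (2 * K)).aestronglyMeasurable)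
    · filter_upwards [MeasureTheory.ae_restrict_mem measurableSet_Ioc] with s hsm
      have hDs : 0 ≤ D s := sq_nonneg _
      have := hDbd s (hOcsub hsm)
      rw [Real.norm_eq_abs, abs_of_nonneg (by positivity)]
      nlinarith
  have hφint : IntervalIntegrable (fun s => Real.exp (-2 * s) * (2 * K * D s))
      MeasureTheory.volume 0 t := by
    rw [intervalIntegrable_iff_integrableOn_Ioc_of_le ht0]
    apply MeasureTheory.Integrable.mono' (g := fun _ => 2 * K * M ^ 2)
      ((MeasureTheory.integrableOn_const_iff).mpr (Or.inr measure_Ioc_lt_top))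
    · apply Measurable.aestronglyMeasurable; fun_prop
    · filter_upwards [MeasureTheory.ae_restrict_mem measurableSet_Ioc] with s hsm
      have hDs : 0 ≤ D s := sq_nonneg _
      have h1 := hDbd s (hOcsub hsm)
      have h2 : Real.exp (-2 * s) ≤ 1 := Real.exp_le_one_iff.mpr (by nlinarith [hsm.1])
      have h3 : (0:ℝ) < Real.exp (-2 * s) := Real.exp_pos _
      rw [Real.norm_eq_abs, abs_of_nonneg (by positivity)]
      calc Real.exp (-2 * s) * (2 * K * D s) ≤ 1 * (2 * K * D s) :=
          mul_le_mul_of_nonneg_right h2 (by positivity)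
      _ ≤ 2 * K * M ^ 2 := by nlinarith
  -- FTC for H
  have hH0 : H 0 = 0 := by
    simp [hHdef, hEdef, hinit₁.1, hinit₁.2, hinit₂.1, hinit₂.2]
  have hFTC : ∫ s in (0:ℝ)..t, H' s = H t - H 0 :=
    intervalIntegral.integral_eq_sub_of_hasDerivAt (fun s _ => hH s)
      (hH'cont.intervalIntegrable 0 t)
  have hmono1 : ∫ s in (0:ℝ)..t, H' s ≤
      ∫ s in (0:ℝ)..t, Real.exp (-2 * s) * (2 * K * D s) := by
    apply intervalIntegral.integral_mono_on ht0 (hH'cont.intervalIntegrable 0 t) hφint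
    intro s hsm
    exact hkey s (hIccsub hsm)
  have hmono2 : ∫ s in (0:ℝ)..t, Real.exp (-2 * s) * (2 * K * D s) ≤
      ∫ s in (0:ℝ)..t, 2 * K * D s := by
    apply intervalIntegral.integral_mono_on ht0 hφint hgint
    intro s hsm
    have h2 : Real.exp (-2 * s) ≤ 1 := Real.exp_le_one_iff.mpr (by nlinarith [hsm.1])
    have hDs : 0 ≤ D s := sq_nonneg _
    calc Real.exp (-2 * s) * (2 * K * D s) ≤ 1 * (2 * K * D s) :=
        mul_le_mul_of_nonneg_right h2 (by positivity)
    _ = 2 * K * D s := one_mul _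
  have hgval : ∫ s in (0:ℝ)..t, 2 * K * D s = 2 * K * ∫ s in (0:ℝ)..t, D s := by
    exact intervalIntegral.integral_const_mul _ _
  have hHt : H t ≤ 2 * K * ∫ s in (0:ℝ)..t, D s := by
    have := hmono1.trans hmono2
    rw [hFTC, hH0, hgval] at *
    linarith [hmono1.trans hmono2]
  -- conclude
  have hEt : E t = Real.exp (2 * t) * H t := by
    simp only [hHdef]
    rw [← mul_assoc, ← Real.exp_add]
    norm_num
  have : E t ≤ Real.exp (2 * t) * (2 * K * ∫ s in (0:ℝ)..t, D s) := by
    rw [hEt]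
    exact mul_le_mul_of_nonneg_left hHt (Real.exp_pos _).le
  calc (deriv u₂ t - deriv u₁ t) ^ 2 + lam ^ 2 * (u₂ t - u₁ t) ^ 2 = E t := rfl
  _ ≤ Real.exp (2 * t) * (2 * K * ∫ s in (0:ℝ)..t, D s) := this
  _ = 2 * K * Real.exp (2 * t) * ∫ s in (0:ℝ)..t, (δ₂ s - δ₁ s) ^ 2 := by
      simp only [hDdef]; ring
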